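/- Let p_1 ∈ [0,1] and Σ_1, Σ_2 ∈ S_+(d). If N_d(0, p_1 Σ_1 + (1−p_1) Σ_2) ≤_cx p_1 N_d(0,Σ_1) + (1−p_1) N_d(0,Σ_2), then p_1(1−p_1) = 0 or Σ_1 = Σ_2. -/

import Mathlib

open MeasureTheory ProbabilityTheory Matrix

noncomputable def stdGaussianPi (d : ℕ) : Measure (Fin d → ℝ) :=
  Measure.pi fun _ => gaussianReal 0 1

/-- The Gaussian law `N_d(m, S)` on `ℝ^d`, defined as the image of the standard Gaussian
by `z ↦ m + S^{1/2} z`. -/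
noncomputable def gaussianPi {d : ℕ} (m : Fin d → ℝ) {S : Matrix (Fin d) (Fin d) ℝ}
    (hS : S.PosSemidef) : Measure (Fin d → ℝ) :=
  Measure.map (fun z => m + (hS.1.eigenvectorUnitary.1 *
      diagonal (fun i => Real.sqrt (hS.1.eigenvalues i)) *
      (star hS.1.eigenvectorUnitary : Matrix (Fin d) (Fin d) ℝ)).mulVec z) (stdGaussianPi d)

/-- Convex order between measures: `μ ≤_cx ν`. -/
def ConvexOrder {E : Type*} [NormedAddCommGroup E] [NormedSpace ℝ E] [MeasurableSpace E]
    (μ ν : Measure E) : Prop :=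
  ∀ φ : E → ℝ, ConvexOn ℝ Set.univ φ → Integrable φ μ → Integrable φ ν →
    ∫ x, φ x ∂μ ≤ ∫ x, φ x ∂ν

open Real
open scoped NNReal ENNReal


lemma gaussianPDFReal_mul_eq (a b : ℝ≥0) (ha : a ≠ 0) (hb : b ≠ 0) (t x : ℝ) :
    gaussianPDFReal 0 a x * gaussianPDFReal 0 b (t - x)
      = gaussianPDFReal 0 (a + b) t * gaussianPDFReal ((a : ℝ) * t / ((a : ℝ) + b)) (a * b / (a + b)) x := by
  have hA : (0:ℝ) < a := lt_of_le_of_ne (a.coe_nonneg) (by exact_mod_cast (Ne.symm ha))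
  have hB : (0:ℝ) < b := lt_of_le_of_ne (b.coe_nonneg) (by exact_mod_cast (Ne.symm hb))
  have hAB : (0:ℝ) < (a:ℝ) + b := by linarith
  simp only [gaussianPDFReal, NNReal.coe_add, NNReal.coe_div, NNReal.coe_mul, sub_zero]
  have hconst : (√(2 * π * a))⁻¹ * (√(2 * π * b))⁻¹
      = (√(2 * π * ((a:ℝ) + b)))⁻¹ * (√(2 * π * ((a:ℝ) * b / ((a:ℝ) + b))))⁻¹ := by
    rw [← mul_inv, ← mul_inv, ← Real.sqrt_mul (by positivity), ← Real.sqrt_mul (by positivity)]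
    congr 1
    field_simp
  have hexp : rexp (-x ^ 2 / (2 * a)) * rexp (-(t - x) ^ 2 / (2 * b))
      = rexp (-t ^ 2 / (2 * ((a:ℝ) + b)))
        * rexp (-(x - (a:ℝ) * t / ((a:ℝ) + b)) ^ 2 / (2 * ((a:ℝ) * b / ((a:ℝ) + b)))) := by
    rw [← Real.exp_add, ← Real.exp_add]
    congr 1
    field_simp
    ring
  calc (√(2 * π * a))⁻¹ * rexp (-x ^ 2 / (2 * a)) * ((√(2 * π * b))⁻¹ * rexp (-(t - x) ^ 2 / (2 * b)))
      = ((√(2 * π * a))⁻¹ * (√(2 * π * b))⁻¹) * (rexp (-x ^ 2 / (2 * a)) * rexp (-(t - x) ^ 2 / (2 * b))) := by ring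
    _ = _ := by rw [hconst, hexp]; ring

lemma mid_var_ne_zero {a b : ℝ≥0} (ha : a ≠ 0) (hb : b ≠ 0) : a * b / (a + b) ≠ 0 := by
  have hA : (0:ℝ) < a := lt_of_le_of_ne (a.coe_nonneg) (by exact_mod_cast (Ne.symm ha))
  have hB : (0:ℝ) < b := lt_of_le_of_ne (b.coe_nonneg) (by exact_mod_cast (Ne.symm hb))
  have h : (0:ℝ) < ((a * b / (a + b) : ℝ≥0) : ℝ) := by push_cast; positivity
  intro hc
  rw [hc] at h
  simp at h

lemma integrable_pdf_conv (a b : ℝ≥0) (ha : a ≠ 0) (hb : b ≠ 0) (t : ℝ) :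
    Integrable (fun x => gaussianPDFReal 0 a x * gaussianPDFReal 0 b (t - x)) := by
  simp_rw [gaussianPDFReal_mul_eq a b ha hb t]
  exact (integrable_gaussianPDFReal _ _).const_mul _

lemma integral_pdf_conv (a b : ℝ≥0) (ha : a ≠ 0) (hb : b ≠ 0) (t : ℝ) :
    ∫ x, gaussianPDFReal 0 a x * gaussianPDFReal 0 b (t - x) = gaussianPDFReal 0 (a + b) t := by
  simp_rw [gaussianPDFReal_mul_eq a b ha hb t]
  rw [integral_const_mul, integral_gaussianPDFReal_eq_one _ (mid_var_ne_zero ha hb), mul_one]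

lemma lintegral_pdf_conv (a b : ℝ≥0) (ha : a ≠ 0) (hb : b ≠ 0) (t : ℝ) :
    ∫⁻ x, gaussianPDF 0 a x * gaussianPDF x b t = gaussianPDF 0 (a + b) t := by
  have hsub : ∀ x, gaussianPDFReal x b t = gaussianPDFReal 0 b (t - x) := by
    intro x
    rw [gaussianPDFReal_sub, zero_add]
  simp only [gaussianPDF, hsub]
  have hmul : ∀ x, ENNReal.ofReal (gaussianPDFReal 0 a x) * ENNReal.ofReal (gaussianPDFReal 0 b (t - x))
      = ENNReal.ofReal (gaussianPDFReal 0 a x * gaussianPDFReal 0 b (t - x)) :=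
    fun x => (ENNReal.ofReal_mul (gaussianPDFReal_nonneg _ _ _)).symm
  simp_rw [hmul]
  rw [← ofReal_integral_eq_lintegral_ofReal (integrable_pdf_conv a b ha hb t)
    (ae_of_all _ (fun x => mul_nonneg (gaussianPDFReal_nonneg _ _ _) (gaussianPDFReal_nonneg _ _ _)))]
  rw [integral_pdf_conv a b ha hb t]

lemma continuous_pdf_pair (b : ℝ≥0) : Continuous (fun p : ℝ × ℝ => gaussianPDFReal p.1 b p.2) := by
  unfold gaussianPDFReal
  fun_prop

lemma gaussianReal_conv (a b : ℝ≥0) :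
    Measure.map (fun p : ℝ × ℝ => p.1 + p.2) ((gaussianReal 0 a).prod (gaussianReal 0 b))
      = gaussianReal 0 (a + b) := by
  by_cases ha : a = 0
  · subst ha
    rw [gaussianReal_zero_var, Measure.dirac_prod,
      Measure.map_map measurable_add measurable_prodMk_left, zero_add]
    have : ((fun p : ℝ × ℝ => p.1 + p.2) ∘ Prod.mk (0:ℝ)) = id := by
      funext y; simp
    rw [this, Measure.map_id]
  by_cases hb : b = 0
  · subst hb
    rw [gaussianReal_zero_var, Measure.prod_dirac,
      Measure.map_map measurable_add measurable_prodMk_right, add_zero]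
    have : ((fun p : ℝ × ℝ => p.1 + p.2) ∘ (fun x : ℝ => (x, (0:ℝ)))) = id := by
      funext y; simp
    rw [this, Measure.map_id]
  have hmeas_pair : Measurable (fun p : ℝ × ℝ => gaussianPDF p.1 b p.2) :=
    ENNReal.measurable_ofReal.comp (continuous_pdf_pair b).measurable
  ext s hs
  rw [Measure.map_apply measurable_add hs, Measure.prod_apply (measurable_add hs)]
  have hsec : ∀ x : ℝ, (gaussianReal 0 b) (Prod.mk x ⁻¹' ((fun p : ℝ × ℝ => p.1 + p.2) ⁻¹' s))
      = ∫⁻ y in s, gaussianPDF x b y := by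
    intro x
    have : Prod.mk x ⁻¹' ((fun p : ℝ × ℝ => p.1 + p.2) ⁻¹' s) = (fun y => x + y) ⁻¹' s := rfl
    rw [this, ← Measure.map_apply (measurable_const_add x) hs, gaussianReal_map_const_add x,
      zero_add, gaussianReal_apply _ hb]
  simp_rw [hsec]
  have hF : Measurable (fun x : ℝ => ∫⁻ y in s, gaussianPDF x b y) :=
    Measurable.lintegral_prod_right hmeas_pair
  rw [gaussianReal_of_var_ne_zero 0 ha,
    lintegral_withDensity_eq_lintegral_mul _ (measurable_gaussianPDF 0 a) hF]
  have hpull : ∀ x : ℝ, gaussianPDF 0 a x * ∫⁻ y in s, gaussianPDF x b y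
      = ∫⁻ y in s, gaussianPDF 0 a x * gaussianPDF x b y := by
    intro x
    exact (lintegral_const_mul' _ _ (by simp [gaussianPDF])).symm
  simp only [Pi.mul_apply]
  simp_rw [hpull]
  rw [lintegral_lintegral_swap]
  · simp_rw [lintegral_pdf_conv a b ha hb]
    rw [← gaussianReal_apply 0 (by simp [ha]) s]
  · exact (((measurable_gaussianPDF 0 a).comp measurable_fst).mul hmeas_pair).aemeasurable

instance stdGaussianPi_prob (d : ℕ) : IsProbabilityMeasure (stdGaussianPi d) := by
  unfold stdGaussianPi; infer_instance

noncomputable def nnSq {d : ℕ} (v : Fin d → ℝ) : ℝ≥0 := ∑ i, NNReal.mk ((v i)^2) (sq_nonneg _)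

lemma continuous_dot {d : ℕ} (w : Fin d → ℝ) : Continuous (fun z : Fin d → ℝ => w ⬝ᵥ z) := by
  unfold dotProduct
  exact continuous_finset_sum _ fun i _ => (continuous_const.mul (continuous_apply i))

lemma measurable_dot {d : ℕ} (w : Fin d → ℝ) : Measurable (fun z : Fin d → ℝ => w ⬝ᵥ z) :=
  (continuous_dot w).measurable

lemma map_dot (d : ℕ) (v : Fin d → ℝ) :
    Measure.map (fun z => v ⬝ᵥ z) (stdGaussianPi d) = gaussianReal 0 (nnSq v) := by
  induction d with
  | zero =>
    have h1 : (fun z : Fin 0 → ℝ => v ⬝ᵥ z) = fun _ => (0:ℝ) := by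
      funext z; simp [dotProduct]
    have h2 : nnSq v = 0 := by simp [nnSq]
    rw [h1, h2, Measure.map_const, measure_univ, one_smul, gaussianReal_zero_var]
  | succ n ih =>
    have hmp := measurePreserving_piFinSuccAbove (fun _ : Fin (n+1) => gaussianReal (0:ℝ) 1) 0
    set e := MeasurableEquiv.piFinSuccAbove (fun _ : Fin (n+1) => ℝ) 0 with he
    have hdot : (fun z : Fin (n+1) → ℝ => v ⬝ᵥ z)
        = (fun q : ℝ × (Fin n → ℝ) => v 0 * q.1 + (v ∘ Fin.succ) ⬝ᵥ q.2) ∘ e := by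
      funext z
      simp [e, MeasurableEquiv.piFinSuccAbove, dotProduct, Fin.sum_univ_succ, Fin.removeNth,
        Fin.tail]
    have hmape : Measure.map e (stdGaussianPi (n+1)) = (gaussianReal 0 1).prod (stdGaussianPi n) :=
      hmp.map_eq
    have hmeas2 : Measurable (fun q : ℝ × (Fin n → ℝ) => v 0 * q.1 + (v ∘ Fin.succ) ⬝ᵥ q.2) :=
      (measurable_fst.const_mul _).add ((measurable_dot _).comp measurable_snd)
    rw [hdot, ← Measure.map_map hmeas2 e.measurable, hmape]
    have hsplit : (fun q : ℝ × (Fin n → ℝ) => v 0 * q.1 + (v ∘ Fin.succ) ⬝ᵥ q.2)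
        = (fun p : ℝ × ℝ => p.1 + p.2)
          ∘ (Prod.map (fun x : ℝ => v 0 * x) (fun y : Fin n → ℝ => (v ∘ Fin.succ) ⬝ᵥ y)) := rfl
    have h1 : Measure.map (Prod.map (fun x : ℝ => v 0 * x) (fun y => (v ∘ Fin.succ) ⬝ᵥ y))
        ((gaussianReal 0 1).prod (stdGaussianPi n))
        = (gaussianReal 0 (NNReal.mk ((v 0)^2) (sq_nonneg _))).prod (gaussianReal 0 (nnSq (v ∘ Fin.succ))) := by
      rw [← Measure.map_prod_map _ _ (measurable_const_mul (v 0)) (measurable_dot _),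
        ih (v ∘ Fin.succ), gaussianReal_map_const_mul (v 0), mul_zero, mul_one]
    rw [hsplit, ← Measure.map_map measurable_add
      ((measurable_const_mul (v 0)).prodMap (measurable_dot _)), h1, gaussianReal_conv]
    congr 1
    apply NNReal.coe_injective
    push_cast [nnSq]
    rw [Fin.sum_univ_succ]
    simp

lemma integrable_abs_gaussian (v : ℝ≥0) : Integrable (fun y : ℝ => |y|) (gaussianReal 0 v) := by
  by_cases hv : v = 0
  · subst hv
    rw [gaussianReal_zero_var]
    refine (integrable_zero _ _ _).congr ?_
    rw [ae_dirac_eq]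
    exact Filter.eventually_pure.2 (by simp)
  rw [gaussianReal_of_var_ne_zero _ hv,
    integrable_withDensity_iff (measurable_gaussianPDF 0 v) (ae_of_all _ fun x => ENNReal.ofReal_lt_top)]
  have hv' : (0:ℝ) < v := lt_of_le_of_ne (v.coe_nonneg) (by exact_mod_cast (Ne.symm hv))
  have hb : (0:ℝ) < (2*(v:ℝ))⁻¹ := by positivity
  have base := (integrable_mul_exp_neg_mul_sq hb).abs
  have heq : (fun x : ℝ => |x * rexp (-(2*(v:ℝ))⁻¹ * x^2)|)
      = fun x : ℝ => |x| * rexp (-x^2 / (2*(v:ℝ))) := by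
    funext x
    rw [abs_mul, abs_of_pos (Real.exp_pos _)]
    congr 1
    field_simp
  rw [heq] at base
  refine (base.const_mul ((√(2 * Real.pi * v))⁻¹)).congr (ae_of_all _ fun x => ?_)
  simp only [gaussianPDF, gaussianPDFReal, sub_zero]
  rw [ENNReal.toReal_ofReal (by positivity)]
  ring

lemma integral_abs_gaussian (v : ℝ≥0) :
    ∫ y, |y| ∂(gaussianReal 0 v) = (∫ y, |y| ∂(gaussianReal 0 1)) * Real.sqrt v := by
  have hmap := gaussianReal_map_const_mul (μ := 0) (v := 1) (Real.sqrt v)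
  rw [mul_zero] at hmap
  have hvar : (NNReal.mk ((Real.sqrt v)^2) (sq_nonneg _)) * 1 = v := by
    rw [mul_one]
    ext
    exact Real.sq_sqrt v.coe_nonneg
  rw [hvar] at hmap
  rw [← hmap, integral_map (measurable_const_mul _).aemeasurable
    continuous_abs.aestronglyMeasurable]
  simp_rw [abs_mul, abs_of_nonneg (Real.sqrt_nonneg (v:ℝ))]
  rw [integral_const_mul]
  ring

lemma abs_gaussian_pos : 0 < ∫ y, |y| ∂(gaussianReal 0 1) := by
  rw [integral_pos_iff_support_of_nonneg (fun y => abs_nonneg y) (integrable_abs_gaussian 1)]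
  have hsupp : Function.support (fun y : ℝ => |y|) = {(0:ℝ)}ᶜ := by
    ext y; simp [Function.support]
  rw [hsupp]
  have h0 : gaussianReal 0 1 {(0:ℝ)} = 0 :=
    gaussianReal_absolutelyContinuous 0 one_ne_zero (measure_singleton 0)
  rw [measure_compl (measurableSet_singleton 0) (by simp [h0]), h0, measure_univ]
  simp

lemma measurable_affine {d : ℕ} (A : Matrix (Fin d) (Fin d) ℝ) (m : Fin d → ℝ) :
    Measurable fun z : Fin d → ℝ => m + A *ᵥ z :=
  measurable_const.add (measurable_pi_lambda _ fun i => measurable_dot (A i))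

noncomputable abbrev psdSqrt {d : ℕ} {S : Matrix (Fin d) (Fin d) ℝ} (hS : S.PosSemidef) :
    Matrix (Fin d) (Fin d) ℝ :=
  hS.1.eigenvectorUnitary.1 * diagonal (fun i => Real.sqrt (hS.1.eigenvalues i)) *
    (star hS.1.eigenvectorUnitary : Matrix (Fin d) (Fin d) ℝ)

lemma sqrt_transpose {d : ℕ} {S : Matrix (Fin d) (Fin d) ℝ} (hS : S.PosSemidef) :
    (psdSqrt hS)ᵀ = psdSqrt hS := by
  rw [← Matrix.conjTranspose_eq_transpose_of_trivial]
  simp only [psdSqrt, conjTranspose_mul, diagonal_conjTranspose, Matrix.mul_assoc]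
  simp [Matrix.mul_assoc, Matrix.star_eq_conjTranspose, Matrix.transpose_transpose]

lemma psdSqrt_mul_self {d : ℕ} {S : Matrix (Fin d) (Fin d) ℝ} (hS : S.PosSemidef) :
    psdSqrt hS * psdSqrt hS = S := by
  have hU : (star hS.1.eigenvectorUnitary : Matrix (Fin d) (Fin d) ℝ) *
      hS.1.eigenvectorUnitary.1 = 1 := Unitary.star_mul_self_of_mem hS.1.eigenvectorUnitary.2
  have hD : diagonal (fun i => Real.sqrt (hS.1.eigenvalues i)) *
      diagonal (fun i => Real.sqrt (hS.1.eigenvalues i)) = diagonal hS.1.eigenvalues := by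
    rw [diagonal_mul_diagonal]
    congr 1
    funext i
    exact Real.mul_self_sqrt (hS.eigenvalues_nonneg i)
  conv_rhs => rw [hS.1.spectral_theorem]
  simp only [psdSqrt, Unitary.conjStarAlgAut_apply]
  calc _ = hS.1.eigenvectorUnitary.1 * diagonal (fun i => Real.sqrt (hS.1.eigenvalues i)) *
        ((star hS.1.eigenvectorUnitary : Matrix (Fin d) (Fin d) ℝ) * hS.1.eigenvectorUnitary.1) *
        diagonal (fun i => Real.sqrt (hS.1.eigenvalues i)) *
        (star hS.1.eigenvectorUnitary : Matrix (Fin d) (Fin d) ℝ) := by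
          simp only [Matrix.mul_assoc]
    _ = _ := by
      rw [hU, Matrix.mul_one, Matrix.mul_assoc _ (diagonal _) (diagonal _), hD]
      rfl

lemma gaussianPi_dot_map {d : ℕ} {S : Matrix (Fin d) (Fin d) ℝ} (hS : S.PosSemidef)
    (ξ : Fin d → ℝ) :
    Measure.map (fun x : Fin d → ℝ => ξ ⬝ᵥ x) (gaussianPi 0 hS)
      = gaussianReal 0 (nnSq (psdSqrt hS *ᵥ ξ)) := by
  rw [gaussianPi, Measure.map_map (measurable_dot ξ) (measurable_affine _ _)]
  have hco : ((fun x : Fin d → ℝ => ξ ⬝ᵥ x) ∘ fun z => 0 + psdSqrt hS *ᵥ z)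
      = fun z => (psdSqrt hS *ᵥ ξ) ⬝ᵥ z := by
    funext z
    simp only [Function.comp_apply, zero_add]
    rw [dotProduct_mulVec]
    congr 1
    rw [← Matrix.mulVec_transpose, sqrt_transpose hS]
  rw [hco, map_dot]

lemma nnSq_sqrt {d : ℕ} {S : Matrix (Fin d) (Fin d) ℝ} (hS : S.PosSemidef) (ξ : Fin d → ℝ) :
    ((nnSq (psdSqrt hS *ᵥ ξ)) : ℝ) = ξ ⬝ᵥ (S *ᵥ ξ) := by
  have h1 : ((nnSq (psdSqrt hS *ᵥ ξ)) : ℝ) = (psdSqrt hS *ᵥ ξ) ⬝ᵥ (psdSqrt hS *ᵥ ξ) := by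
    push_cast [nnSq, dotProduct]
    exact Finset.sum_congr rfl fun i _ => pow_two _
  rw [h1, dotProduct_mulVec, Matrix.vecMul_mulVec, sqrt_transpose hS, psdSqrt_mul_self hS,
    ← dotProduct_mulVec]

lemma integral_abs_dot {d : ℕ} {S : Matrix (Fin d) (Fin d) ℝ} (hS : S.PosSemidef)
    (ξ : Fin d → ℝ) :
    ∫ x, |ξ ⬝ᵥ x| ∂(gaussianPi 0 hS)
      = (∫ y, |y| ∂(gaussianReal 0 1)) * Real.sqrt (ξ ⬝ᵥ (S *ᵥ ξ)) := by
  have h := integral_map (μ := gaussianPi 0 hS) (φ := fun x : Fin d → ℝ => ξ ⬝ᵥ x)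
    (measurable_dot ξ).aemeasurable (f := fun y : ℝ => |y|) ?hm
  case hm => exact continuous_abs.aestronglyMeasurable
  rw [← h, gaussianPi_dot_map hS ξ, integral_abs_gaussian, nnSq_sqrt hS ξ]

lemma integrable_abs_dot {d : ℕ} {S : Matrix (Fin d) (Fin d) ℝ} (hS : S.PosSemidef)
    (ξ : Fin d → ℝ) :
    Integrable (fun x : Fin d → ℝ => |ξ ⬝ᵥ x|) (gaussianPi 0 hS) := by
  have h := integrable_abs_gaussian (nnSq (psdSqrt hS *ᵥ ξ))
  rw [← gaussianPi_dot_map hS ξ] at h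
  exact (integrable_map_measure continuous_abs.aestronglyMeasurable
    (measurable_dot ξ).aemeasurable).mp h

lemma quad_single {d : ℕ} (A : Matrix (Fin d) (Fin d) ℝ) (k : Fin d) :
    (Pi.single k 1 : Fin d → ℝ) ⬝ᵥ (A *ᵥ (Pi.single k 1 : Fin d → ℝ)) = A k k := by
  simp [dotProduct, Matrix.mulVec, Pi.single_apply, mul_ite, Finset.sum_ite_eq]

lemma matrix_ext_of_quad {d : ℕ} {A : Matrix (Fin d) (Fin d) ℝ} (hA : Aᵀ = A)
    (h : ∀ ξ : Fin d → ℝ, ξ ⬝ᵥ (A *ᵥ ξ) = 0) : A = 0 := by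
  have hdiag : ∀ k, A k k = 0 := fun k => (quad_single A k) ▸ h (Pi.single k 1)
  ext i j
  have hsym : A j i = A i j := by
    have := congrFun (congrFun hA i) j
    simpa [Matrix.transpose_apply] using this
  have hexp : (Pi.single i 1 + Pi.single j 1 : Fin d → ℝ) ⬝ᵥ
      (A *ᵥ (Pi.single i 1 + Pi.single j 1 : Fin d → ℝ))
      = A i i + (Pi.single i 1 : Fin d → ℝ) ⬝ᵥ (A *ᵥ (Pi.single j 1 : Fin d → ℝ))
        + (Pi.single j 1 : Fin d → ℝ) ⬝ᵥ (A *ᵥ (Pi.single i 1 : Fin d → ℝ)) + A j j := by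
    rw [Matrix.mulVec_add, dotProduct_add, add_dotProduct, add_dotProduct,
      quad_single, quad_single]
    ring
  have hij : (Pi.single i 1 : Fin d → ℝ) ⬝ᵥ (A *ᵥ (Pi.single j 1 : Fin d → ℝ)) = A i j := by
    simp [dotProduct, Matrix.mulVec, Pi.single_apply, mul_ite, Finset.sum_ite_eq]
  have hji : (Pi.single j 1 : Fin d → ℝ) ⬝ᵥ (A *ᵥ (Pi.single i 1 : Fin d → ℝ)) = A j i := by
    simp [dotProduct, Matrix.mulVec, Pi.single_apply, mul_ite, Finset.sum_ite_eq]
  have h2 := h (Pi.single i 1 + Pi.single j 1)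
  rw [hexp, hij, hji, hdiag i, hdiag j, hsym] at h2
  have : A i j = 0 := by linarith
  simpa using this

lemma convexOn_abs_dot {d : ℕ} (ξ : Fin d → ℝ) :
    ConvexOn ℝ Set.univ (fun x : Fin d → ℝ => |ξ ⬝ᵥ x|) := by
  refine ⟨convex_univ, fun x _ y _ a b ha hb hab => ?_⟩
  have hlin : ξ ⬝ᵥ (a • x + b • y) = a * (ξ ⬝ᵥ x) + b * (ξ ⬝ᵥ y) := by
    rw [dotProduct_add, dotProduct_smul, dotProduct_smul, smul_eq_mul, smul_eq_mul]
  simp only [hlin, smul_eq_mul]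
  calc |a * (ξ ⬝ᵥ x) + b * (ξ ⬝ᵥ y)| ≤ |a * (ξ ⬝ᵥ x)| + |b * (ξ ⬝ᵥ y)| := abs_add_le _ _
    _ = a * |ξ ⬝ᵥ x| + b * |ξ ⬝ᵥ y| := by
        rw [abs_mul, abs_mul, abs_of_nonneg ha, abs_of_nonneg hb]

theorem stmt15 {d : ℕ} {S1 S2 : Matrix (Fin d) (Fin d) ℝ}
    (hS1 : S1.PosSemidef) (hS2 : S2.PosSemidef)
    {p1 : ℝ} (hp1 : p1 ∈ Set.Icc (0:ℝ) 1)
    (hmix : (p1 • S1 + (1 - p1) • S2).PosSemidef)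
    (hcx : ConvexOrder (gaussianPi 0 hmix)
      (ENNReal.ofReal p1 • gaussianPi 0 hS1 +
        ENNReal.ofReal (1 - p1) • gaussianPi 0 hS2)) :
    p1 * (1 - p1) = 0 ∨ S1 = S2 := by
  by_cases hp : p1 * (1 - p1) = 0
  · exact Or.inl hp
  right
  have hp0 : 0 < p1 := lt_of_le_of_ne hp1.1 (by intro h; apply hp; rw [← h]; ring)
  have hp1' : p1 < 1 := lt_of_le_of_ne hp1.2 (by intro h; apply hp; rw [h]; ring)
  have hquad : ∀ ξ : Fin d → ℝ, ξ ⬝ᵥ (S1 *ᵥ ξ) = ξ ⬝ᵥ (S2 *ᵥ ξ) := by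
    intro ξ
    set a := ξ ⬝ᵥ (S1 *ᵥ ξ) with ha_def
    set b := ξ ⬝ᵥ (S2 *ᵥ ξ) with hb_def
    have ha0 : 0 ≤ a := by rw [ha_def]; simpa using hS1.dotProduct_mulVec_nonneg ξ
    have hb0 : 0 ≤ b := by rw [hb_def]; simpa using hS2.dotProduct_mulVec_nonneg ξ
    have hmixq : ξ ⬝ᵥ ((p1 • S1 + (1 - p1) • S2) *ᵥ ξ) = p1 * a + (1 - p1) * b := by
      rw [Matrix.add_mulVec, Matrix.smul_mulVec, Matrix.smul_mulVec,
        dotProduct_add, dotProduct_smul, dotProduct_smul, smul_eq_mul, smul_eq_mul]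
    have hm0 : 0 ≤ p1 * a + (1 - p1) * b :=
      add_nonneg (mul_nonneg hp0.le ha0) (mul_nonneg (by linarith) hb0)
    have hc0pos : 0 < ∫ y, |y| ∂(gaussianReal 0 1) := abs_gaussian_pos
    set c0 := ∫ y, |y| ∂(gaussianReal 0 1) with hc0
    have hint1 := integrable_abs_dot hS1 ξ
    have hint2 := integrable_abs_dot hS2 ξ
    have hintm := integrable_abs_dot hmix ξ
    have hintν : Integrable (fun x : Fin d → ℝ => |ξ ⬝ᵥ x|)
        (ENNReal.ofReal p1 • gaussianPi 0 hS1 + ENNReal.ofReal (1 - p1) • gaussianPi 0 hS2) :=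
      (hint1.smul_measure ENNReal.ofReal_ne_top).add_measure
        (hint2.smul_measure ENNReal.ofReal_ne_top)
    have key := hcx _ (convexOn_abs_dot ξ) hintm hintν
    rw [integral_add_measure (hint1.smul_measure ENNReal.ofReal_ne_top)
        (hint2.smul_measure ENNReal.ofReal_ne_top),
      integral_smul_measure, integral_smul_measure, integral_abs_dot hS1 ξ,
      integral_abs_dot hS2 ξ, integral_abs_dot hmix ξ, hmixq,
      ENNReal.toReal_ofReal hp0.le, ENNReal.toReal_ofReal (by linarith : (0:ℝ) ≤ 1 - p1)] at key
    rw [smul_eq_mul, smul_eq_mul] at key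
    by_contra hab
    have hL : Real.sqrt (p1 * a + (1 - p1) * b)
        ≤ p1 * Real.sqrt a + (1 - p1) * Real.sqrt b := by
      nlinarith [key, hc0pos]
    have hsq : p1 * a + (1 - p1) * b ≤ (p1 * Real.sqrt a + (1 - p1) * Real.sqrt b)^2 := by
      calc p1 * a + (1 - p1) * b = (Real.sqrt (p1 * a + (1 - p1) * b))^2 :=
            (Real.sq_sqrt hm0).symm
        _ ≤ _ := pow_le_pow_left₀ (Real.sqrt_nonneg _) hL 2
    have hxa := Real.sq_sqrt ha0
    have hxb := Real.sq_sqrt hb0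
    have hpp : 0 < p1 * (1 - p1) := mul_pos hp0 (by linarith)
    have hle : (Real.sqrt a - Real.sqrt b)^2 ≤ 0 := by nlinarith [hsq, hxa, hxb, hpp]
    have hzero : (Real.sqrt a - Real.sqrt b)^2 = 0 := le_antisymm hle (sq_nonneg _)
    have hxy : Real.sqrt a = Real.sqrt b :=
      sub_eq_zero.mp ((pow_eq_zero_iff two_ne_zero).mp hzero)
    apply hab
    rw [← hxa, ← hxb, hxy]
  have hAt : (S1 - S2)ᵀ = S1 - S2 := by
    rw [Matrix.transpose_sub, ← Matrix.conjTranspose_eq_transpose_of_trivial,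
      ← Matrix.conjTranspose_eq_transpose_of_trivial, hS1.1, hS2.1]
  have hAq : ∀ ξ : Fin d → ℝ, ξ ⬝ᵥ ((S1 - S2) *ᵥ ξ) = 0 := by
    intro ξ
    rw [Matrix.sub_mulVec, dotProduct_sub, hquad ξ, sub_self]
  exact sub_eq_zero.mp (matrix_ext_of_quad hAt hAq)
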